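/- For rooted labeled trees T and T' over label alphabet Σ and a metric cost function γ : Σ^⊥ × Σ^⊥ → ℝ, SdTed(T, T') = 0 if and only if T and T' are isomorphic as rooted labeled trees. -/

import Mathlib

open scoped Classical

/-- A rooted labeled tree with vertex set `V` and labels in `σ`, encoded by a
parent function: every vertex reaches the root by iterating `par`, and the
root is a fixed point of `par`. -/
structure LTree (V : Type) (σ : Type) where
  root : V
  par : V → V
  label : V → σ
  par_root : par root = root
  acyc : ∀ w : V, ∃ k : ℕ, par^[k] w = root

namespace LTree

variable {V V' V'' : Type} {σ : Type}

/-- The depth of a vertex: its distance to the root. -/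
noncomputable def depth (T : LTree V σ) (w : V) : ℕ := Nat.find (T.acyc w)

/-- `T.Desc v w` means `w` is a descendant of `v` (or `w = v`), i.e. `w` belongs
to the subtree `T[v]` rooted at `v`. -/
def Desc (T : LTree V σ) (v w : V) : Prop := ∃ k : ℕ, T.par^[k] w = v

/-- A structure and depth preserving mapping (SdM) between rooted labeled trees. -/
def IsSdM (T : LTree V σ) (T' : LTree V' σ) (M : Finset (V × V')) : Prop :=
  (∀ p ∈ M, ∀ q ∈ M, (p.1 = q.1 ↔ p.2 = q.2)) ∧
  (T.root, T'.root) ∈ M ∧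
  (∀ p ∈ M, p.1 ≠ T.root → (T.par p.1, T'.par p.2) ∈ M)

/-- An isomorphism of rooted labeled trees: a bijection of the vertex sets
preserving the root, the parent relation (hence all edges), and all labels. -/
structure Iso (T : LTree V σ) (T' : LTree V' σ) where
  e : V ≃ V'
  root_eq : e T.root = T'.root
  par_eq : ∀ w, e (T.par w) = T'.par (e w)
  label_eq : ∀ w, T'.label (e w) = T.label w

/-- `γ` is a metric on `Σ ∪ {⊥}` (where `⊥` is encoded by `none`). -/
def IsMetricCost (γ : Option σ → Option σ → ℝ) : Prop :=
  (∀ a b, γ a b = 0 ↔ a = b) ∧ (∀ a b, γ a b = γ b a) ∧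
  (∀ a b c, γ a c ≤ γ a b + γ b c)

/-- The cost `γ(M)` of a mapping `M`: relabeling costs for matched pairs plus
deletion costs for unmatched vertices of `T` plus insertion costs for
unmatched vertices of `T'`. -/
noncomputable def cost [Fintype V] [Fintype V'] (γ : Option σ → Option σ → ℝ)
    (T : LTree V σ) (T' : LTree V' σ) (M : Finset (V × V')) : ℝ :=
  (∑ p ∈ M, γ (some (T.label p.1)) (some (T'.label p.2)))
  + (∑ w ∈ Finset.univ.filter (fun w : V => ∀ p ∈ M, p.1 ≠ w),
      γ (some (T.label w)) none)
  + (∑ w' ∈ Finset.univ.filter (fun w' : V' => ∀ p ∈ M, p.2 ≠ w'),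
      γ none (some (T'.label w')))

/-- The structure and depth preserving tree edit distance: the minimum cost
of a structure and depth preserving mapping between `T` and `T'`. -/
noncomputable def SdTed [Fintype V] [Fintype V'] (γ : Option σ → Option σ → ℝ)
    (T : LTree V σ) (T' : LTree V' σ) : ℝ :=
  sInf {c : ℝ | ∃ M : Finset (V × V'), IsSdM T T' M ∧ cost γ T T' M = c}

theorem Desc.par {T : LTree V σ} {v w : V} (h : T.Desc v w) (hw : w ≠ v) :
    T.Desc v (T.par w) := by
  obtain ⟨k, hk⟩ := h
  cases k with
  | zero => exact absurd hk hw
  | succ k => exact ⟨k, by rwa [Function.iterate_succ_apply] at hk⟩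

/-- The parent function of the subtree `T[v]`. -/
noncomputable def subPar (T : LTree V σ) (v : V) (w : {w : V // T.Desc v w}) :
    {w : V // T.Desc v w} :=
  if h : (w : V) = v then ⟨v, 0, rfl⟩ else ⟨T.par w, w.2.par h⟩

/-- The subtree `T[v]` of `T` rooted at `v`, induced by `v` and all its
descendants. -/
noncomputable def sub (T : LTree V σ) (v : V) : LTree {w : V // T.Desc v w} σ where
  root := ⟨v, 0, rfl⟩
  par := subPar T v
  label := fun w => T.label w
  par_root := dif_pos rfl
  acyc := by
    have key : ∀ (k : ℕ) (w : {w : V // T.Desc v w}), T.par^[k] (w : V) = v →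
        (subPar T v)^[k] w = ⟨v, 0, rfl⟩ := by
      intro k
      induction k with
      | zero => intro w hw; exact Subtype.ext hw
      | succ k ih =>
        intro w hw
        by_cases hv : (w : V) = v
        · rw [Function.iterate_succ_apply]
          have : subPar T v w = ⟨v, 0, rfl⟩ := dif_pos hv
          rw [this]
          have hfix : subPar T v ⟨v, 0, rfl⟩ = ⟨v, 0, rfl⟩ := dif_pos rfl
          exact Function.iterate_fixed hfix k
        · rw [Function.iterate_succ_apply]
          have : subPar T v w = ⟨T.par w, w.2.par hv⟩ := dif_neg hv
          rw [this]
          exact ih _ (by rwa [Function.iterate_succ_apply] at hw)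
    intro w
    obtain ⟨k, hk⟩ := w.2
    exact ⟨k, key k w hk⟩

end LTree

open LTree

/-- For rooted labeled trees `T` and `T'` over label alphabet
`σ` and a metric cost function `γ : Σ^⊥ × Σ^⊥ → ℝ`, `SdTed(T, T') = 0` if and
only if `T` and `T'` are isomorphic as rooted labeled trees. -/
theorem sdted_eq_zero_iff_iso {σ : Type} (γ : Option σ → Option σ → ℝ)
    (hγ : IsMetricCost γ) {V V' : Type} [Fintype V] [Fintype V']
    (T : LTree V σ) (T' : LTree V' σ) :
    SdTed γ T T' = 0 ↔ Nonempty (Iso T T') := by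
  obtain ⟨hid, hsymm, htri⟩ := hγ
  have hnn : ∀ a b, 0 ≤ γ a b := by
    intro a b
    have h1 := htri a b a
    rw [(hid a a).mpr rfl, hsymm b a] at h1
    linarith
  set S := {c : ℝ | ∃ M : Finset (V × V'), IsSdM T T' M ∧ cost γ T T' M = c} with hS
  have hcostnn : ∀ M : Finset (V × V'), 0 ≤ cost γ T T' M := by
    intro M
    unfold cost
    exact add_nonneg (add_nonneg (Finset.sum_nonneg fun _ _ => hnn _ _)
      (Finset.sum_nonneg fun _ _ => hnn _ _)) (Finset.sum_nonneg fun _ _ => hnn _ _)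
  have hSnn : ∀ c ∈ S, 0 ≤ c := by rintro c ⟨M, _, rfl⟩; exact hcostnn M
  have hSne : S.Nonempty := by
    refine ⟨_, {(T.root, T'.root)}, ⟨?_, Finset.mem_singleton_self _, ?_⟩, rfl⟩
    · intro p hp q hq
      rw [Finset.mem_singleton] at hp hq
      subst hp; subst hq; simp
    · intro p hp hne
      rw [Finset.mem_singleton] at hp
      exact absurd (by rw [hp]) hne
  have hSfin : S.Finite :=
    Set.Finite.subset (Set.finite_range (cost γ T T'))
      (by rintro c ⟨M, _, rfl⟩; exact ⟨M, rfl⟩)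
  constructor
  · intro h
    have hmem := hSne.csInf_mem hSfin
    rw [show sInf S = SdTed γ T T' from rfl, h] at hmem
    obtain ⟨M, hM, hc⟩ := hmem
    unfold cost at hc
    have hA : (0:ℝ) ≤ ∑ p ∈ M, γ (some (T.label p.1)) (some (T'.label p.2)) :=
      Finset.sum_nonneg fun _ _ => hnn _ _
    have hB : (0:ℝ) ≤ ∑ w ∈ Finset.univ.filter (fun w : V => ∀ p ∈ M, p.1 ≠ w),
        γ (some (T.label w)) none := Finset.sum_nonneg fun _ _ => hnn _ _
    have hC : (0:ℝ) ≤ ∑ w' ∈ Finset.univ.filter (fun w' : V' => ∀ p ∈ M, p.2 ≠ w'),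
        γ none (some (T'.label w')) := Finset.sum_nonneg fun _ _ => hnn _ _
    have hA0 : ∑ p ∈ M, γ (some (T.label p.1)) (some (T'.label p.2)) = 0 := by linarith
    have hB0 : ∑ w ∈ Finset.univ.filter (fun w : V => ∀ p ∈ M, p.1 ≠ w),
        γ (some (T.label w)) none = 0 := by linarith
    have hC0 : ∑ w' ∈ Finset.univ.filter (fun w' : V' => ∀ p ∈ M, p.2 ≠ w'),
        γ none (some (T'.label w')) = 0 := by linarith
    have hlab : ∀ p ∈ M, T.label p.1 = T'.label p.2 := by
      intro p hp
      have := (Finset.sum_eq_zero_iff_of_nonneg fun _ _ => hnn _ _).mp hA0 p hp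
      exact Option.some.inj ((hid _ _).mp this)
    have hsurj : ∀ w : V, ∃ w', (w, w') ∈ M := by
      intro w
      by_contra hcon
      push_neg at hcon
      have hmemf : w ∈ Finset.univ.filter (fun w : V => ∀ p ∈ M, p.1 ≠ w) := by
        rw [Finset.mem_filter]
        refine ⟨Finset.mem_univ _, fun p hp hpe => ?_⟩
        exact hcon p.2 (by rw [← hpe]; exact hp)
      have := (Finset.sum_eq_zero_iff_of_nonneg fun _ _ => hnn _ _).mp hB0 w hmemf
      exact Option.some_ne_none _ ((hid _ _).mp this)
    have hsurj' : ∀ w' : V', ∃ w, (w, w') ∈ M := by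
      intro w'
      by_contra hcon
      push_neg at hcon
      have hmemf : w' ∈ Finset.univ.filter (fun w' : V' => ∀ p ∈ M, p.2 ≠ w') := by
        rw [Finset.mem_filter]
        refine ⟨Finset.mem_univ _, fun p hp hpe => ?_⟩
        exact hcon p.1 (by rw [← hpe]; exact hp)
      have := (Finset.sum_eq_zero_iff_of_nonneg fun _ _ => hnn _ _).mp hC0 w' hmemf
      exact Option.some_ne_none _ ((hid _ _).mp this).symm
    choose f hf using hsurj
    choose g hg using hsurj'
    obtain ⟨hdef, hroot, hstr⟩ := hM
    have hli : Function.LeftInverse g f := fun w =>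
      (hdef (g (f w), f w) (hg (f w)) (w, f w) (hf w)).mpr rfl
    have hri : Function.RightInverse g f := fun w' =>
      (hdef (g w', f (g w')) (hf (g w')) (g w', w') (hg w')).mp rfl
    have hre : f T.root = T'.root :=
      (hdef (T.root, f T.root) (hf T.root) (T.root, T'.root) hroot).mp rfl
    refine ⟨⟨⟨f, g, hli, hri⟩, hre, ?_, fun w => (hlab (w, f w) (hf w)).symm⟩⟩
    intro w
    by_cases hw : w = T.root
    · subst hw
      show f (T.par T.root) = T'.par (f T.root)
      rw [T.par_root, hre, T'.par_root]
    · have h1 := hstr (w, f w) (hf w) hw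
      exact (hdef (T.par w, f (T.par w)) (hf (T.par w)) (T.par w, T'.par (f w)) h1).mp rfl
  · rintro ⟨e⟩
    set M : Finset (V × V') := Finset.univ.image (fun w => (w, e.e w)) with hMdef
    have hmemM : ∀ p : V × V', p ∈ M ↔ p.2 = e.e p.1 := by
      intro p
      simp only [hMdef, Finset.mem_image, Finset.mem_univ, true_and]
      constructor
      · rintro ⟨w, rfl⟩; rfl
      · intro hp; exact ⟨p.1, by rw [← hp]⟩
    have hsdm : IsSdM T T' M := by
      refine ⟨?_, ?_, ?_⟩
      · intro p hp q hq
        rw [hmemM] at hp hq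
        constructor
        · intro h; rw [hp, hq, h]
        · intro h; exact e.e.injective (by rw [← hp, ← hq]; exact h)
      · rw [hmemM]; exact e.root_eq.symm
      · intro p hp _
        rw [hmemM] at hp ⊢
        show T'.par p.2 = e.e (T.par p.1)
        rw [hp, e.par_eq]
    have hc0 : cost γ T T' M = 0 := by
      unfold cost
      have h1 : ∑ p ∈ M, γ (some (T.label p.1)) (some (T'.label p.2)) = 0 := by
        refine Finset.sum_eq_zero fun p hp => ?_
        rw [hmemM] at hp
        exact (hid _ _).mpr (by rw [hp, e.label_eq])
      have h2 : Finset.univ.filter (fun w : V => ∀ p ∈ M, p.1 ≠ w) = ∅ := by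
        rw [Finset.filter_eq_empty_iff]
        intro w _ hcon
        exact hcon (w, e.e w) ((hmemM _).mpr rfl) rfl
      have h3 : Finset.univ.filter (fun w' : V' => ∀ p ∈ M, p.2 ≠ w') = ∅ := by
        rw [Finset.filter_eq_empty_iff]
        intro w' _ hcon
        exact hcon (e.e.symm w', w') ((hmemM _).mpr (e.e.apply_symm_apply w').symm)
          rfl
      rw [h1, h2, h3, Finset.sum_empty, Finset.sum_empty]
      ring
    have h0S : (0:ℝ) ∈ S := ⟨M, hsdm, hc0⟩
    exact le_antisymm (csInf_le ⟨0, hSnn⟩ h0S) (le_csInf hSne hSnn)
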